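/- Let F be a stable necklace and z ∈ F a point that is not a main node of any copy of F (z ∉ M_F). Then for each m ≥ 1 the set U_m = ⋃{A : A an m-level copy of F with z ∉ A} is connected, the sets U_m increase with m, and F \ {z} = ⋃_{m≥1} U_m is connected; hence z is not a cut point of F. -/

import Mathlib

open Set Topology Metric Bornology
open scoped ENNReal NNReal

noncomputable section

/-- Euclidean space `ℝ^d`. -/
abbrev Euc (d : ℕ) := EuclideanSpace ℝ (Fin d)

/-- A fractal necklace in `ℝ^d`: the attractor `F` of a necklace IFS `f_1, …, f_n`
(`n ≥ 3`) of contractive homeomorphisms of `ℝ^d`, where cyclically adjacent 1-level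
copies meet in a single point (a main node `z k`) and non-adjacent copies are disjoint. -/
structure Necklace (d : ℕ) where
  n : ℕ
  hn : 3 ≤ n
  f : Fin n → (Euc d ≃ₜ Euc d)
  contr : ∀ k, ∃ c : NNReal, c < 1 ∧ LipschitzWith c (f k)
  F : Set (Euc d)
  Fne : F.Nonempty
  Fcpt : IsCompact F
  Fattr : F = ⋃ k, (f k) '' F
  z : Fin n → Euc d
  hz : ∀ k : Fin n, (f k) '' F ∩ (f (k + ⟨1, by omega⟩)) '' F = {z k}
  hdisj : ∀ m k : Fin n, m ≠ k → m ≠ k + ⟨1, by omega⟩ → k ≠ m + ⟨1, by omega⟩ →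
    (f m) '' F ∩ (f k) '' F = ∅

namespace Necklace

variable {d : ℕ}

/-- The digit `1` of `Fin n`. -/
def one (N : Necklace d) : Fin N.n := ⟨1, by have := N.hn; omega⟩

/-- The homeomorphism `f_σ = f_{i₁} ∘ ⋯ ∘ f_{i_m}` associated to a word `σ = i₁⋯i_m`. -/
def word (N : Necklace d) : List (Fin N.n) → (Euc d ≃ₜ Euc d)
  | [] => Homeomorph.refl _
  | i :: s => (N.word s).trans (N.f i)

/-- The copy `F_σ = f_σ(F)` of the necklace. -/
def copy (N : Necklace d) (σ : List (Fin N.n)) : Set (Euc d) := N.word σ '' N.F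

/-- `c_m(x)`: the number of words `σ` of length `m` with `x ∈ F_σ`. -/
def cnt (N : Necklace d) (m : ℕ) (x : Euc d) : ℕ :=
  Set.ncard {σ : List (Fin N.n) | σ.length = m ∧ x ∈ N.copy σ}

/-- The boundary `∂_F F_k = {z_{k-1}, z_k}` of the 1-level copy `F_k` in `F`. -/
def bdry (N : Necklace d) (k : Fin N.n) : Set (Euc d) := {N.z (k - N.one), N.z k}

/-- A necklace is stable if for each `k` at least two second-level copies `F_{kj}`
meet `∂_F F_k`. -/
def Stable (N : Necklace d) : Prop :=
  ∀ k : Fin N.n,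
    2 ≤ Set.ncard {A : Set (Euc d) |
      (∃ j : Fin N.n, A = N.f k '' (N.f j '' N.F)) ∧ (A ∩ N.bdry k).Nonempty}

/-- A necklace is good if `∂_F F_k` is not contained in any second-level copy `F_{kj}`. -/
def Good (N : Necklace d) : Prop :=
  ∀ k j : Fin N.n, ¬ (N.bdry k ⊆ N.f k '' (N.f j '' N.F))

/-- A necklace is of bounded ramification if `{c_m(z_k)}_m` is bounded for each `k`. -/
def BoundedRamification (N : Necklace d) : Prop :=
  ∀ k : Fin N.n, ∃ C : ℕ, ∀ m : ℕ, N.cnt m (N.z k) ≤ C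

/-- `M_F`: the set of points that are main nodes of some copy of `F`. -/
def MF (N : Necklace d) : Set (Euc d) :=
  {x | ∃ (σ : List (Fin N.n)) (k : Fin N.n), x = N.word σ (N.z k)}

/-- A necklace has no cut points if `F \ {x}` is connected for every `x ∈ F`. -/
def NoCutPoints (N : Necklace d) : Prop :=
  ∀ x ∈ N.F, IsConnected (N.F \ {x})

/-- Property I: each 1-level copy `F_k` has an arc from `z_{k-1}` to `z_k` passing
through at least two main nodes of `F_k`. -/
def PropertyI (N : Necklace d) : Prop :=
  ∀ k : Fin N.n, ∃ γ : Path (N.z (k - N.one)) (N.z k),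
    Function.Injective γ ∧ (∀ t, γ t ∈ N.f k '' N.F) ∧
    ∃ p q : Euc d, p ≠ q ∧ (∃ j, p = N.f k (N.z j)) ∧ (∃ j, q = N.f k (N.z j)) ∧
      p ∈ Set.range γ ∧ q ∈ Set.range γ

/-- A necklace is self-similar if the maps of its NIFS are (contractive) similitudes. -/
def SelfSimilar (N : Necklace d) : Prop :=
  ∀ k : Fin N.n, ∃ c : ℝ, 0 < c ∧ c < 1 ∧ ∀ x y, dist (N.f k x) (N.f k y) = c * dist x y

/-- The open set condition for the NIFS of a necklace. -/
def OSC (N : Necklace d) : Prop :=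
  ∃ V : Set (Euc d), V.Nonempty ∧ IsOpen V ∧ IsBounded V ∧
    (∀ k, N.f k '' V ⊆ V) ∧ ∀ j k : Fin N.n, j ≠ k → N.f j '' V ∩ N.f k '' V = ∅

end Necklace

/-- `U_m`: the union of all `m`-level copies of `F` not containing the point `x`. -/
def Necklace.U {d : ℕ} (N : Necklace d) (x : Euc d) (m : ℕ) : Set (Euc d) :=
  ⋃ σ ∈ {σ : List (Fin N.n) | σ.length = m ∧ x ∉ N.copy σ}, N.copy σ



namespace Necklace

variable {d : ℕ} (N : Necklace d)

lemma word_nil_apply (x : Euc d) : N.word [] x = x := rfl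

lemma word_cons_apply (a : Fin N.n) (s : List (Fin N.n)) (x : Euc d) :
    N.word (a :: s) x = N.f a (N.word s x) := rfl

lemma word_append_apply (s t : List (Fin N.n)) (x : Euc d) :
    N.word (s ++ t) x = N.word s (N.word t x) := by
  induction s with
  | nil => rfl
  | cons a s ih => simp [word_cons_apply, List.cons_append, ih]

lemma copy_nil : N.copy [] = N.F := by
  simp [copy, word]

lemma copy_cons (a : Fin N.n) (s : List (Fin N.n)) :
    N.copy (a :: s) = N.f a '' N.copy s := by
  rw [copy, copy, image_image]
  exact image_congr fun x _ => rfl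

lemma copy_append (s t : List (Fin N.n)) :
    N.copy (s ++ t) = N.word s '' N.copy t := by
  rw [copy, copy, image_image]
  exact image_congr fun x _ => N.word_append_apply s t x

lemma copy_concat (s : List (Fin N.n)) (j : Fin N.n) :
    N.copy (s ++ [j]) = N.word s '' (N.f j '' N.F) := by
  rw [copy_append, copy_cons, copy_nil]

lemma copy_subset_F (σ : List (Fin N.n)) : N.copy σ ⊆ N.F := by
  induction σ with
  | nil => rw [copy_nil]
  | cons a s ih =>
    rw [copy_cons]
    intro y hy
    obtain ⟨w, hw, rfl⟩ := hy
    rw [N.Fattr]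
    exact mem_iUnion.mpr ⟨a, ⟨w, ih hw, rfl⟩⟩

lemma copy_nonempty (σ : List (Fin N.n)) : (N.copy σ).Nonempty :=
  N.Fne.image _

lemma copy_eq_iUnion (σ : List (Fin N.n)) :
    N.copy σ = ⋃ j, N.copy (σ ++ [j]) := by
  have : N.copy σ = N.word σ '' (⋃ j, N.f j '' N.F) := by rw [← N.Fattr]; rfl
  rw [this, image_iUnion]
  exact iUnion_congr fun j => (N.copy_concat σ j).symm

lemma concat_subset (s : List (Fin N.n)) (j : Fin N.n) :
    N.copy (s ++ [j]) ⊆ N.copy s := by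
  rw [copy_concat, copy]
  apply image_mono
  intro y hy
  rw [N.Fattr]
  exact mem_iUnion.mpr ⟨j, hy⟩

lemma z_mem (k : Fin N.n) :
    N.z k ∈ N.f k '' N.F ∩ N.f (k + N.one) '' N.F :=
  (N.hz k).ge rfl

lemma z_mem_MF (k : Fin N.n) : N.z k ∈ N.MF := ⟨[], k, rfl⟩

lemma MF_map (a : Fin N.n) {y : Euc d} (hy : y ∈ N.MF) : N.f a y ∈ N.MF := by
  obtain ⟨σ, k, rfl⟩ := hy
  exact ⟨a :: σ, k, rfl⟩

lemma add_one_ne (k : Fin N.n) : k + N.one ≠ k := by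
  have hn := N.hn
  intro h
  have hv : (k.val + 1) % N.n = k.val := by
    have := congrArg Fin.val h
    simpa [Fin.add_def, one] using this
  rcases Nat.lt_or_ge (k.val + 1) N.n with h' | h'
  · rw [Nat.mod_eq_of_lt h'] at hv; omega
  · have h1 : k.val + 1 = N.n := by have := k.isLt; omega
    rw [h1, Nat.mod_self] at hv
    have := N.hn; omega

lemma sub_one_ne (k : Fin N.n) : k - N.one ≠ k := by
  haveI : NeZero N.n := ⟨by have := N.hn; omega⟩
  intro h
  have h2 : k - N.one + N.one = k + N.one := by rw [h]
  rw [sub_add_cancel] at h2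
  exact N.add_one_ne k h2.symm

lemma mem_MF_of_mem_two :
    ∀ (σ ρ : List (Fin N.n)), σ.length = ρ.length → σ ≠ ρ → ∀ x,
      x ∈ N.copy σ → x ∈ N.copy ρ → x ∈ N.MF := by
  intro σ
  induction σ with
  | nil =>
    intro ρ h hne x _ _
    exact absurd (List.length_eq_zero_iff.mp h.symm).symm hne
  | cons a σ' ih =>
    intro ρ h hne x hx1 hx2
    cases ρ with
    | nil => simp at h
    | cons b ρ' =>
      by_cases hab : a = b
      · subst hab
        rw [copy_cons] at hx1 hx2
        obtain ⟨y, hy, rfl⟩ := hx1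
        obtain ⟨y', hy', he⟩ := hx2
        have hyy : y' = y := (N.f a).injective he
        subst hyy
        have hσρ : σ' ≠ ρ' := fun e => hne (by rw [e])
        exact N.MF_map a (ih ρ' (by simpa using h) hσρ y' hy hy')
      · have h1 : x ∈ N.f a '' N.F := by
          rw [copy_cons] at hx1
          exact image_mono (N.copy_subset_F σ') hx1
        have h2 : x ∈ N.f b '' N.F := by
          rw [copy_cons] at hx2
          exact image_mono (N.copy_subset_F ρ') hx2
        by_cases hb : b = a + N.one
        · subst hb
          have : x ∈ ({N.z a} : Set (Euc d)) := by
            rw [← N.hz a]; exact ⟨h1, h2⟩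
          rw [mem_singleton_iff] at this
          rw [this]
          exact N.z_mem_MF a
        · by_cases ha : a = b + N.one
          · subst ha
            have : x ∈ ({N.z b} : Set (Euc d)) := by
              rw [← N.hz b]; exact ⟨h2, h1⟩
            rw [mem_singleton_iff] at this
            rw [this]
            exact N.z_mem_MF b
          · have hd := N.hdisj a b hab ha (fun e => hb e)
            have hmem : x ∈ N.f a '' N.F ∩ N.f b '' N.F := ⟨h1, h2⟩
            rw [hd] at hmem
            exact absurd hmem (notMem_empty x)

lemma unique_copy {x : Euc d} (hxM : x ∉ N.MF) {σ ρ : List (Fin N.n)}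
    (h : σ.length = ρ.length) (hx1 : x ∈ N.copy σ) (hx2 : x ∈ N.copy ρ) : σ = ρ := by
  by_contra hne
  exact hxM (N.mem_MF_of_mem_two σ ρ h hne x hx1 hx2)

lemma exists_copy {x : Euc d} (hxF : x ∈ N.F) (m : ℕ) :
    ∃ σ : List (Fin N.n), σ.length = m ∧ x ∈ N.copy σ := by
  induction m with
  | zero => exact ⟨[], rfl, by rwa [copy_nil]⟩
  | succ m ih =>
    obtain ⟨σ, hσ, hx⟩ := ih
    rw [copy_eq_iUnion, mem_iUnion] at hx
    obtain ⟨j, hj⟩ := hx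
    exact ⟨σ ++ [j], by simp [hσ], hj⟩

open scoped ENNReal NNReal

section Chain

/-- Stepping around `Fin n` by one preserves a property that is invariant under `+1`. -/
lemma fin_cycle {n : ℕ} (hn : 1 < n) (g : Fin n → Prop)
    (hg : ∀ j : Fin n, g j ↔ g (j + ⟨1, hn⟩)) : ∀ j j' : Fin n, g j ↔ g j' := by
  suffices h : ∀ (v : ℕ) (hv : v < n), g ⟨0, by omega⟩ ↔ g ⟨v, hv⟩ by
    intro j j'
    cases j with
    | mk v hv =>
      cases j' with
      | mk v' hv' => rw [← h v hv, ← h v' hv']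
  intro v
  induction v with
  | zero => intro hv; rfl
  | succ v ihv =>
    intro hv
    have hv' : v < n := by omega
    have hstep : (⟨v, hv'⟩ : Fin n) + ⟨1, hn⟩ = ⟨v + 1, hv⟩ := by
      simp [Fin.add_def, Fin.ext_iff, Nat.mod_eq_of_lt hv]
    rw [ihv hv', hg ⟨v, hv'⟩, hstep]

open Fin.NatCast in
/-- A cyclic chain of preconnected sets with one set removed is connected. -/
lemma chain_conn {n : ℕ} (hn : 3 ≤ n) {X : Type*} [TopologicalSpace X]
    (S : Fin n → Set X) (hS : ∀ j, IsPreconnected (S j)) (hSne : ∀ j, (S j).Nonempty)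
    (w : Fin n → X) (hw : ∀ j, w j ∈ S j ∩ S (j + ⟨1, by omega⟩)) (k₀ : Fin n) :
    IsConnected (⋃ j ∈ {j : Fin n | j ≠ k₀}, S j) := by
  haveI : NeZero n := ⟨by omega⟩
  set t : Set (Fin n) := {j : Fin n | j ≠ k₀} with ht
  set R : Fin n → Fin n → Prop := fun i j => (S i ∩ S j).Nonempty ∧ i ∈ t with hR
  -- membership of k₀ + v for 1 ≤ v ≤ n - 1
  have hmem : ∀ v : ℕ, 1 ≤ v → v ≤ n - 1 → (k₀ + (v : Fin n)) ∈ t := by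
    intro v h1 h2
    simp only [ht, mem_setOf_eq]
    intro h
    have : (v : Fin n) = 0 := by
      have := add_left_cancel (a := k₀) (b := (v : Fin n)) (c := 0) (by simpa using h)
      simpa using this
    rw [Fin.ext_iff, Fin.val_natCast, Fin.val_zero, Nat.mod_eq_of_lt (by omega)] at this
    omega
  have hone : ((1 : ℕ) : Fin n) = ⟨1, by omega⟩ := by
    rw [Fin.ext_iff, Fin.val_natCast, Nat.mod_eq_of_lt (by omega)]
  have hsucc : ∀ v : ℕ, (((v + 1 : ℕ)) : Fin n) = (v : Fin n) + ⟨1, by omega⟩ := by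
    intro v
    rw [← hone]
    push_cast
    ring
  have hwstep : ∀ v : ℕ, (S (k₀ + (v : Fin n)) ∩ S (k₀ + ((v + 1 : ℕ) : Fin n))).Nonempty := by
    intro v
    refine ⟨w (k₀ + (v : Fin n)), (hw _).1, ?_⟩
    have : k₀ + ((v+1 : ℕ) : Fin n) = (k₀ + (v : Fin n)) + ⟨1, by omega⟩ := by
      rw [hsucc v, add_assoc]
    rw [this]
    exact (hw _).2
  have key : ∀ a b : ℕ, 1 ≤ a → a ≤ b → b ≤ n - 1 →
      Relation.ReflTransGen R (k₀ + (a : Fin n)) (k₀ + (b : Fin n)) := by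
    intro a b h1 hab
    induction b, hab using Nat.le_induction with
    | base => intro _; exact Relation.ReflTransGen.refl
    | succ b hb ih =>
      intro hbn
      refine Relation.ReflTransGen.tail (ih (by omega)) ?_
      exact ⟨hwstep b, hmem b (by omega) (by omega)⟩
  have key' : ∀ a b : ℕ, 1 ≤ a → a ≤ b → b ≤ n - 1 →
      Relation.ReflTransGen R (k₀ + (b : Fin n)) (k₀ + (a : Fin n)) := by
    intro a b h1 hab
    induction b, hab using Nat.le_induction with
    | base => intro _; exact Relation.ReflTransGen.refl
    | succ b hb ih =>
      intro hbn
      refine Relation.ReflTransGen.head ?_ (ih (by omega))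
      refine ⟨?_, hmem (b+1) (by omega) (by omega)⟩
      obtain ⟨p, hp1, hp2⟩ := hwstep b
      exact ⟨p, hp2, hp1⟩
  have hrep : ∀ i ∈ t, ∃ v : ℕ, 1 ≤ v ∧ v ≤ n - 1 ∧ i = k₀ + (v : Fin n) := by
    intro i hi
    refine ⟨(i - k₀).val, ?_, ?_, ?_⟩
    · have h0 : (i - k₀).val ≠ 0 := by
        intro hv
        exact (sub_ne_zero.mpr hi) (Fin.ext (by simp [hv]))
      omega
    · have := (i - k₀).isLt; omega
    · rw [Fin.cast_val_eq_self, add_sub_cancel]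
  have K : ∀ i ∈ t, ∀ j ∈ t, Relation.ReflTransGen R i j := by
    intro i hi j hj
    obtain ⟨a, ha1, ha2, rfl⟩ := hrep i hi
    obtain ⟨b, hb1, hb2, rfl⟩ := hrep j hj
    rcases le_total a b with h | h
    · exact key a b ha1 h hb2
    · exact key' b a hb1 h ha2
  constructor
  · refine ⟨w k₀, mem_biUnion (?_ : k₀ + (⟨1, by omega⟩ : Fin n) ∈ t) ?_⟩
    · rw [← hone]; exact hmem 1 le_rfl (by omega)
    · exact (hw k₀).2
  · exact IsPreconnected.biUnion_of_reflTransGen (fun j _ => hS j) K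

end Chain

lemma conn_minus (hF : IsPreconnected N.F) (k₀ : Fin N.n) :
    IsConnected (⋃ j ∈ {j : Fin N.n | j ≠ k₀}, N.f j '' N.F) := by
  refine chain_conn N.hn (fun j => N.f j '' N.F)
    (fun j => (hF.image _ (N.f j).continuous.continuousOn))
    (fun j => N.Fne.image _) N.z (fun j => N.z_mem j) k₀

lemma color_const (m : ℕ) (Φ : List (Fin N.n) → Prop)
    (hΦ : ∀ σ ρ, σ.length = m → ρ.length = m → (N.copy σ ∩ N.copy ρ).Nonempty →
      (Φ σ ↔ Φ ρ)) :
    ∀ σ ρ, σ.length = m → ρ.length = m → (Φ σ ↔ Φ ρ) := by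
  induction m generalizing Φ with
  | zero =>
    intro σ ρ hσ hρ
    rw [List.length_eq_zero_iff] at hσ hρ
    rw [hσ, hρ]
  | succ m ih =>
    have hn1 : 1 < N.n := by have := N.hn; omega
    have ring0 : ∀ τ : List (Fin N.n), τ.length = m → ∀ j j' : Fin N.n,
        Φ (τ ++ [j]) ↔ Φ (τ ++ [j']) := by
      intro τ hτ
      refine fin_cycle hn1 (fun j => Φ (τ ++ [j])) ?_
      intro j
      refine hΦ _ _ (by simp [hτ]) (by simp [hτ]) ?_
      refine ⟨N.word τ (N.z j), ?_, ?_⟩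
      · rw [N.copy_concat]
        exact mem_image_of_mem _ (N.z_mem j).1
      · rw [N.copy_concat]
        exact mem_image_of_mem _ (N.z_mem j).2
    set j₁ : Fin N.n := ⟨0, by omega⟩ with hj₁
    set Ψ : List (Fin N.n) → Prop := fun τ => Φ (τ ++ [j₁]) with hΨdef
    have hΨ : ∀ τ τ', τ.length = m → τ'.length = m →
        (N.copy τ ∩ N.copy τ').Nonempty → (Ψ τ ↔ Ψ τ') := by
      rintro τ τ' hτ hτ' ⟨p, hp1, hp2⟩
      rw [N.copy_eq_iUnion, mem_iUnion] at hp1 hp2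
      obtain ⟨a, ha⟩ := hp1
      obtain ⟨b, hb⟩ := hp2
      calc Ψ τ ↔ Φ (τ ++ [a]) := ring0 τ hτ j₁ a
        _ ↔ Φ (τ' ++ [b]) := hΦ _ _ (by simp [hτ]) (by simp [hτ']) ⟨p, ha, hb⟩
        _ ↔ Ψ τ' := ring0 τ' hτ' b j₁
    intro σ ρ hσ hρ
    obtain ⟨σ', a, rfl⟩ := (List.eq_nil_or_concat' σ).resolve_left
      (by intro h; rw [h] at hσ; simp at hσ)
    obtain ⟨ρ', b, rfl⟩ := (List.eq_nil_or_concat' ρ).resolve_left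
      (by intro h; rw [h] at hρ; simp at hρ)
    have hσ' : σ'.length = m := by simpa using hσ
    have hρ' : ρ'.length = m := by simpa using hρ
    calc Φ (σ' ++ [a]) ↔ Ψ σ' := ring0 σ' hσ' a j₁
      _ ↔ Ψ ρ' := ih Ψ hΨ σ' ρ' hσ' hρ'
      _ ↔ Φ (ρ' ++ [b]) := ring0 ρ' hρ' j₁ b

/-- A uniform contraction ratio and the diameter estimate for copies. -/
lemma exists_ratio : ∃ c : ℝ≥0, c < 1 ∧
    ∀ σ : List (Fin N.n), EMetric.diam (N.copy σ) ≤ (c : ℝ≥0∞) ^ σ.length * EMetric.diam N.F := by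
  choose cf hcf1 hcfL using N.contr
  set c0 : ℝ≥0 := Finset.univ.sup cf with hc0
  refine ⟨c0, ?_, ?_⟩
  · rw [hc0, Finset.sup_lt_iff (by norm_num : (⊥ : ℝ≥0) < 1)]
    exact fun k _ => hcf1 k
  · intro σ
    induction σ with
    | nil => simp [copy_nil]
    | cons a s ihs =>
      rw [copy_cons]
      calc EMetric.diam (N.f a '' N.copy s)
          ≤ (c0 : ℝ≥0∞) * EMetric.diam (N.copy s) :=
            LipschitzWith.ediam_image_le
              ((hcfL a).weaken (Finset.le_sup (Finset.mem_univ a))) _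
        _ ≤ (c0 : ℝ≥0∞) * ((c0 : ℝ≥0∞) ^ s.length * EMetric.diam N.F) :=
            mul_le_mul_right ihs _
        _ = (c0 : ℝ≥0∞) ^ (a :: s).length * EMetric.diam N.F := by
            rw [List.length_cons, pow_succ]; ring

lemma F_preconnected : IsPreconnected N.F := by
  obtain ⟨c, hc1, hdiam⟩ := N.exists_ratio
  rintro u v hu hv hcov ⟨a, haF, hau⟩ ⟨b, hbF, hbv⟩
  by_contra hcon
  rw [not_nonempty_iff_eq_empty] at hcon
  have hnot : ∀ p ∈ N.F, p ∈ u → p ∉ v := by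
    intro p hp hpu hpv
    exact absurd (show p ∈ (∅ : Set (Euc d)) from hcon ▸ ⟨hp, hpu, hpv⟩) (notMem_empty p)
  have hAeq : N.F ∩ u = N.F \ v := by
    ext p
    constructor
    · rintro ⟨hp, hpu⟩; exact ⟨hp, hnot p hp hpu⟩
    · rintro ⟨hp, hpv⟩
      rcases hcov hp with h | h
      · exact ⟨hp, h⟩
      · exact absurd h hpv
  have hBeq : N.F ∩ v = N.F \ u := by
    ext p
    constructor
    · rintro ⟨hp, hpv⟩
      refine ⟨hp, fun hpu => hnot p hp hpu hpv⟩
    · rintro ⟨hp, hpu⟩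
      rcases hcov hp with h | h
      · exact absurd h hpu
      · exact ⟨hp, h⟩
  have hAc : IsCompact (N.F ∩ u) := by
    rw [hAeq]; exact N.Fcpt.diff hv
  have hBcl : IsClosed (N.F ∩ v) := by
    rw [hBeq]; exact N.Fcpt.isClosed.sdiff hu
  have hABdisj : Disjoint (N.F ∩ u) (N.F ∩ v) := by
    rw [disjoint_left]
    rintro p ⟨hp, hpu⟩ ⟨_, hpv⟩
    exact hnot p hp hpu hpv
  obtain ⟨r, hr, hrd⟩ := EMetric.exists_pos_forall_lt_edist hAc hBcl hABdisj
  -- choose the level m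
  have htend : Filter.Tendsto (fun m : ℕ => (c : ℝ≥0∞) ^ m * EMetric.diam N.F)
      Filter.atTop (nhds 0) := by
    have h0 : Filter.Tendsto (fun m : ℕ => (c : ℝ≥0∞) ^ m) Filter.atTop (nhds 0) :=
      ENNReal.tendsto_pow_atTop_nhds_zero_of_lt_one (by exact_mod_cast hc1)
    simpa [EMetric.diam] using ENNReal.Tendsto.mul_const h0
      (Or.inr N.Fcpt.isBounded.ediam_ne_top)
  have hev := htend.eventually (gt_mem_nhds (show (0 : ℝ≥0∞) < r by exact_mod_cast hr))
  obtain ⟨m, hm⟩ := hev.exists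
  -- each m-level copy is contained in u or in v
  have hmono : ∀ σ : List (Fin N.n), σ.length = m → N.copy σ ⊆ u ∨ N.copy σ ⊆ v := by
    intro σ hσ
    by_cases h : ∃ p ∈ N.copy σ, p ∈ u
    · left
      obtain ⟨p, hp, hpu⟩ := h
      intro q hq
      rcases hcov (N.copy_subset_F σ hq) with hqu | hqv
      · exact hqu
      · exfalso
        have h1 : p ∈ N.F ∩ u := ⟨N.copy_subset_F σ hp, hpu⟩
        have h2 : q ∈ N.F ∩ v := ⟨N.copy_subset_F σ hq, hqv⟩
        have := hrd p h1 q h2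
        have hle : edist p q ≤ (c : ℝ≥0∞) ^ m * EMetric.diam N.F :=
          le_trans (EMetric.edist_le_diam_of_mem hp hq) (hσ ▸ hdiam σ)
        exact absurd (lt_of_le_of_lt hle hm) (by exact absurd (this.trans_le hle) hm.not_gt)
    · right
      push_neg at h
      intro q hq
      rcases hcov (N.copy_subset_F σ hq) with hqu | hqv
      · exact absurd hqu (h q hq)
      · exact hqv
  have hΦ : ∀ σ ρ, σ.length = m → ρ.length = m → (N.copy σ ∩ N.copy ρ).Nonempty →
      ((N.copy σ ⊆ u) ↔ (N.copy ρ ⊆ u)) := by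
    rintro σ ρ hσ hρ ⟨p, hp1, hp2⟩
    constructor
    · intro h1
      rcases hmono ρ hρ with h2 | h2
      · exact h2
      · exact absurd (hnot p (N.copy_subset_F σ hp1) (h1 hp1) (h2 hp2)) not_false
    · intro h1
      rcases hmono σ hσ with h2 | h2
      · exact h2
      · exact absurd (hnot p (N.copy_subset_F ρ hp2) (h1 hp2) (h2 hp1)) not_false
  have hconst := N.color_const m (fun σ => N.copy σ ⊆ u) hΦ
  obtain ⟨σa, hσa, haσ⟩ := N.exists_copy haF m
  obtain ⟨σb, hσb, hbσ⟩ := N.exists_copy hbF m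
  have hΦa : N.copy σa ⊆ u := by
    rcases hmono σa hσa with h | h
    · exact h
    · exact absurd (hnot a haF hau (h haσ)) not_false
  have hΦb : ¬ (N.copy σb ⊆ u) := by
    intro h
    exact hnot b hbF (h hbσ) hbv
  exact hΦb ((hconst σa σb hσa hσb).mp hΦa)

lemma F_connected : IsConnected N.F := ⟨N.Fne, N.F_preconnected⟩


lemma copy_single (k : Fin N.n) : N.copy [k] = N.f k '' N.F := by
  rw [show ([k] : List (Fin N.n)) = k :: [] from rfl, copy_cons, copy_nil]

lemma mem_U {x y : Euc d} {m : ℕ} :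
    y ∈ N.U x m ↔ ∃ σ, σ.length = m ∧ x ∉ N.copy σ ∧ y ∈ N.copy σ := by
  simp [U, and_assoc]

lemma U_subset_diff {x : Euc d} {m : ℕ} : N.U x m ⊆ N.F \ {x} := by
  intro y hy
  rw [N.mem_U] at hy
  obtain ⟨σ, _, hxσ, hyσ⟩ := hy
  refine ⟨N.copy_subset_F σ hyσ, ?_⟩
  simp only [mem_singleton_iff]
  rintro rfl
  exact hxσ hyσ

lemma U_succ_mono (x : Euc d) (m : ℕ) : N.U x m ⊆ N.U x (m + 1) := by
  intro y hy
  rw [N.mem_U] at hy ⊢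
  obtain ⟨σ, hl, hx, hy⟩ := hy
  rw [N.copy_eq_iUnion σ, mem_iUnion] at hy
  obtain ⟨j, hj⟩ := hy
  exact ⟨σ ++ [j], by simp [hl], fun hc => hx (N.concat_subset σ j hc), hj⟩

lemma U_mono (x : Euc d) {m m' : ℕ} (h : m ≤ m') : N.U x m ⊆ N.U x m' := by
  induction m', h using Nat.le_induction with
  | base => exact Subset.rfl
  | succ m' hm ih => exact ih.trans (N.U_succ_mono x m')

lemma U_conn (hs : N.Stable) {x : Euc d} (hxF : x ∈ N.F) (hxM : x ∉ N.MF) :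
    ∀ m, 1 ≤ m → IsConnected (N.U x m) := by
  intro m hm
  induction m, hm using Nat.le_induction with
  | base =>
    obtain ⟨σ₁, hσ₁, hxσ₁⟩ := N.exists_copy hxF 1
    obtain ⟨k₀, rfl⟩ := List.length_eq_one_iff.mp hσ₁
    have hequ : N.U x 1 = ⋃ j ∈ {j : Fin N.n | j ≠ k₀}, N.f j '' N.F := by
      ext y
      rw [N.mem_U]
      simp only [mem_iUnion, mem_setOf_eq, exists_prop]
      constructor
      · rintro ⟨σ, hl, hxσ, hyσ⟩
        obtain ⟨k, rfl⟩ := List.length_eq_one_iff.mp hl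
        refine ⟨k, fun e => hxσ (by rwa [e]), ?_⟩
        rwa [← N.copy_single]
      · rintro ⟨j, hj, hyj⟩
        refine ⟨[j], rfl, ?_, by rwa [N.copy_single]⟩
        intro hc
        have : ([j] : List (Fin N.n)) = [k₀] := N.unique_copy hxM rfl hc hxσ₁
        exact hj (by simpa using this)
    rw [hequ]
    exact N.conn_minus N.F_preconnected k₀
  | succ m hm ih =>
    obtain ⟨σ, hσl, hxσ⟩ := N.exists_copy hxF m
    have hxσ1 : x ∈ ⋃ j, N.copy (σ ++ [j]) := by
      rw [← N.copy_eq_iUnion]; exact hxσ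
    obtain ⟨j₀, hj₀⟩ := mem_iUnion.mp hxσ1
    set L : Set (Euc d) := ⋃ j ∈ {j : Fin N.n | j ≠ j₀}, N.copy (σ ++ [j]) with hL
    have hLconn : IsConnected L := by
      have hLeq : L = N.word σ '' (⋃ j ∈ {j : Fin N.n | j ≠ j₀}, N.f j '' N.F) := by
        rw [hL, image_iUnion₂]
        exact iUnion₂_congr fun j _ => N.copy_concat σ j
      rw [hLeq]
      exact (N.conn_minus N.F_preconnected j₀).image _ (N.word σ).continuous.continuousOn
    -- decompose σ and use stability
    obtain ⟨τ, k, rfl⟩ := (List.eq_nil_or_concat' σ).resolve_left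
      (by intro h; rw [h] at hσl; simp at hσl; omega)
    obtain ⟨A, hA, hAne⟩ := Set.exists_ne_of_one_lt_ncard
      (lt_of_lt_of_le one_lt_two (hs k)) (N.f k '' (N.f j₀ '' N.F))
    obtain ⟨⟨j, rfl⟩, ⟨w, hwA, hwb⟩⟩ := hA
    have hj : j ≠ j₀ := fun e => hAne (by rw [e])
    have hwL : N.word τ w ∈ N.copy ((τ ++ [k]) ++ [j]) := by
      rw [N.copy_concat (τ ++ [k]) j]
      obtain ⟨w', hw', rfl⟩ := hwA
      refine ⟨w', hw', ?_⟩
      rw [N.word_append_apply τ [k] w']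
      rfl
    have hwLmem : N.word τ w ∈ L :=
      mem_biUnion (show j ∈ {j : Fin N.n | j ≠ j₀} from hj) hwL
    have hUmem : N.word τ w ∈ N.U x m := by
      simp only [bdry, mem_insert_iff, mem_singleton_iff] at hwb
      rw [N.mem_U]
      rcases hwb with rfl | rfl
      · refine ⟨τ ++ [k - N.one], by simpa using hσl, ?_, ?_⟩
        · intro hc
          have heq : τ ++ [k - N.one] = τ ++ [k] :=
            N.unique_copy hxM (by simp) hc hxσ
          exact N.sub_one_ne k (by simpa using heq)
        · rw [N.copy_concat]
          exact mem_image_of_mem _ (N.z_mem (k - N.one)).1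
      · refine ⟨τ ++ [k + N.one], by simpa using hσl, ?_, ?_⟩
        · intro hc
          have heq : τ ++ [k + N.one] = τ ++ [k] :=
            N.unique_copy hxM (by simp) hc hxσ
          exact N.add_one_ne k (by simpa using heq)
        · rw [N.copy_concat]
          exact mem_image_of_mem _ (N.z_mem k).2
    have hUeq : N.U x (m + 1) = N.U x m ∪ L := by
      apply Subset.antisymm
      · intro y hy
        rw [N.mem_U] at hy
        obtain ⟨ρ, hρl, hxρ, hyρ⟩ := hy
        obtain ⟨ρ', j', rfl⟩ := (List.eq_nil_or_concat' ρ).resolve_left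
          (by intro h; rw [h] at hρl; simp at hρl)
        have hρ'l : ρ'.length = m := by simpa using hρl
        by_cases hxρ' : x ∈ N.copy ρ'
        · have heq : ρ' = τ ++ [k] := N.unique_copy hxM (by rw [hρ'l, hσl]) hxρ' hxσ
          subst heq
          have hj' : j' ≠ j₀ := fun e => hxρ (by rw [e]; exact hj₀)
          exact Or.inr (mem_biUnion (show j' ∈ {j : Fin N.n | j ≠ j₀} from hj') hyρ)
        · exact Or.inl (N.mem_U.mpr ⟨ρ', hρ'l, hxρ', N.concat_subset ρ' j' hyρ⟩)
      · rintro y (hy | hy)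
        · exact N.U_succ_mono x m hy
        · rw [hL, mem_iUnion₂] at hy
          obtain ⟨j', hj', hyj'⟩ := hy
          refine N.mem_U.mpr ⟨(τ ++ [k]) ++ [j'], by rw [List.length_append, hσl]; simp, ?_, hyj'⟩
          intro hc
          have heq : (τ ++ [k]) ++ [j'] = (τ ++ [k]) ++ [j₀] :=
            N.unique_copy hxM (by simp) hc hj₀
          exact hj' (by simpa using heq)
    rw [hUeq]
    exact IsConnected.union ⟨N.word τ w, hUmem, hwLmem⟩ ih hLconn


end Necklace

/-- Let `F` be a stable necklace and `x ∈ F` a point that is not a main node of any copy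
of `F`.  Then each `U_m` (the union of the `m`-level copies not containing `x`) is
connected for `m ≥ 1`, the `U_m` increase with `m`, their union over `m ≥ 1` is
`F \ {x}`, and `F \ {x}` is connected; hence `x` is not a cut point of `F`. -/
theorem Necklace.not_cutPoint_of_not_mem_MF {d : ℕ} (N : Necklace d) (hs : N.Stable)
    (x : Euc d) (hxF : x ∈ N.F) (hxM : x ∉ N.MF) :
    (∀ m : ℕ, 1 ≤ m → IsConnected (N.U x m)) ∧
    (∀ m m' : ℕ, m ≤ m' → N.U x m ⊆ N.U x m') ∧
    (N.F \ {x} = ⋃ m : ℕ, ⋃ _ : 1 ≤ m, N.U x m) ∧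
    IsConnected (N.F \ {x}) := by
  have hdiff_eq : N.F \ {x} = ⋃ m : ℕ, ⋃ _ : 1 ≤ m, N.U x m := by
    apply Set.Subset.antisymm
    · rintro y ⟨hyF, hyx⟩
      obtain ⟨c, hc1, hdiam⟩ := N.exists_ratio
      have hyx' : y ≠ x := by simpa using hyx
      have hxy : (0 : ℝ≥0∞) < edist x y := edist_pos.mpr (fun e => hyx' e.symm)
      have htend : Filter.Tendsto (fun m : ℕ => (c : ℝ≥0∞) ^ m * EMetric.diam N.F)
          Filter.atTop (nhds 0) := by
        have h0 : Filter.Tendsto (fun m : ℕ => (c : ℝ≥0∞) ^ m) Filter.atTop (nhds 0) :=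
          ENNReal.tendsto_pow_atTop_nhds_zero_of_lt_one (by exact_mod_cast hc1)
        simpa [EMetric.diam] using ENNReal.Tendsto.mul_const h0 (Or.inr N.Fcpt.isBounded.ediam_ne_top)
      obtain ⟨m₀, hm₀⟩ := (htend.eventually (gt_mem_nhds hxy)).exists
      set m := max m₀ 1 with hmdef
      obtain ⟨σ, hσl, hyσ⟩ := N.exists_copy hyF m
      have hxnot : x ∉ N.copy σ := by
        intro hc
        have h1 : edist x y ≤ EMetric.diam (N.copy σ) :=
          EMetric.edist_le_diam_of_mem hc hyσ
        have h2 : EMetric.diam (N.copy σ) ≤ (c : ℝ≥0∞) ^ m * EMetric.diam N.F :=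
          hσl ▸ hdiam σ
        have h3 : (c : ℝ≥0∞) ^ m * EMetric.diam N.F ≤ (c : ℝ≥0∞) ^ m₀ * EMetric.diam N.F :=
          mul_le_mul_left
            (pow_le_pow_right_of_le_one' (by exact_mod_cast hc1.le) (le_max_left m₀ 1)) _
        exact absurd ((h1.trans h2).trans h3) hm₀.not_ge
      exact mem_iUnion₂.mpr ⟨m, le_max_right m₀ 1, N.mem_U.mpr ⟨σ, hσl, hxnot, hyσ⟩⟩
    · exact iUnion₂_subset fun m _ => N.U_subset_diff
  refine ⟨fun m hm => N.U_conn hs hxF hxM m hm, fun m m' h => N.U_mono x h, hdiff_eq, ?_⟩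
  rw [hdiff_eq]
  have hre : (⋃ m : ℕ, ⋃ _ : 1 ≤ m, N.U x m) = ⋃₀ (Set.range (fun k : ℕ => N.U x (k + 1))) := by
    rw [sUnion_range]
    ext y
    simp only [mem_iUnion]
    constructor
    · rintro ⟨m, hm, hy⟩
      exact ⟨m - 1, by rwa [Nat.sub_add_cancel hm]⟩
    · rintro ⟨k, hy⟩
      exact ⟨k + 1, by omega, hy⟩
  constructor
  · obtain ⟨p, hp⟩ := (N.U_conn hs hxF hxM 1 le_rfl).nonempty
    exact ⟨p, mem_iUnion₂.mpr ⟨1, le_rfl, hp⟩⟩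
  · rw [hre]
    apply IsPreconnected.sUnion_directed
    · rintro _ ⟨k, rfl⟩ _ ⟨l, rfl⟩
      exact ⟨N.U x (max k l + 1), ⟨max k l, rfl⟩,
        N.U_mono x (by omega), N.U_mono x (by omega)⟩
    · rintro _ ⟨k, rfl⟩
      exact (N.U_conn hs hxF hxM (k + 1) (by omega)).isPreconnected
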